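/- If N : [0,∞)×V → ℝ is a bounded solution of the heat equation d/dt N_t + L̃ N_t = 0 with N_0 ≡ 0, then for any α > 0 the function v := ∫_0^∞ e^{−tα} N_t dt satisfies (L̃ + α)v = 0. -/

import Mathlib

open MeasureTheory

set_option maxHeartbeats 1000000

/-- The formal Laplacian `L̃u(x) = (1/m(x)) ∑_y b(x,y)(u(x)-u(y)) + (c(x)/m(x))u(x)`. -/
noncomputable def formalL {V : Type*} (b : V → V → ℝ) (c m : V → ℝ) (u : V → ℝ) (x : V) : ℝ :=
  (1 / m x) * ∑' y, b x y * (u x - u y) + (c x / m x) * u x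

/-- If `N` is a bounded solution of the heat equation
`d/dt N_t + L̃N_t = 0` with `N_0 ≡ 0`, then for any `α > 0` the function
`v := ∫_0^∞ e^{−tα} N_t dt` solves `(L̃ + α)v = 0`. -/
theorem laplace_transform_of_heat_solution
    (V : Type*) [Countable V] (m : V → ℝ) (hm : ∀ x, 0 < m x)
    (b : V → V → ℝ) (c : V → ℝ)
    (hb_symm : ∀ x y, b x y = b y x) (hb_nonneg : ∀ x y, 0 ≤ b x y)
    (hb_diag : ∀ x, b x x = 0) (hb_sum : ∀ x, Summable fun y => b x y)
    (hc : ∀ x, 0 ≤ c x)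
    (α : ℝ) (hα : 0 < α)
    (N : ℝ → V → ℝ)
    (hbdd : ∃ C, ∀ t, 0 ≤ t → ∀ x, |N t x| ≤ C)
    (hN0 : ∀ x, N 0 x = 0)
    (hcont : ∀ x, ContinuousOn (fun t => N t x) (Set.Ici 0))
    (hdom : ∀ t, 0 ≤ t → ∀ x, Summable fun y => b x y * |N t y|)
    (hheat : ∀ x, ∀ t, 0 ≤ t →
      HasDerivAt (fun s => N s x) (-(formalL b c m (N t) x)) t)
    (v : V → ℝ)
    (hv : ∀ x, v x = ∫ t in Set.Ioi (0 : ℝ), Real.exp (-t * α) * N t x) :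
    (∀ x, Summable fun y => b x y * |v y|) ∧
      ∀ x, formalL b c m v x + α * v x = 0 := by
  classical
  obtain ⟨C₀, hC₀⟩ := hbdd
  set C : ℝ := max C₀ 0 with hCdef
  have hC : ∀ t, 0 ≤ t → ∀ x, |N t x| ≤ C := fun t ht x =>
    (hC₀ t ht x).trans (le_max_left _ _)
  have hCnn : (0:ℝ) ≤ C := le_max_right _ _
  -- integrability of the exponential weight
  have hexp_int : IntegrableOn (fun t : ℝ => Real.exp (-t * α)) (Set.Ioi 0) := by
    have h := exp_neg_integrableOn_Ioi (0:ℝ) hα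
    have : (fun t : ℝ => Real.exp (-t * α)) = fun t : ℝ => Real.exp (-α * t) := by
      funext t; ring_nf
    rw [this]; exact h
  set K : ℝ := ∫ t in Set.Ioi (0:ℝ), Real.exp (-t * α) with hKdef
  have hKnn : 0 ≤ K := integral_nonneg fun t => (Real.exp_pos _).le
  -- measurability of t ↦ N t x on (0,∞)
  have hNmeas : ∀ x, AEStronglyMeasurable (fun t => N t x)
      (volume.restrict (Set.Ioi (0:ℝ))) := fun x =>
    ((hcont x).mono Set.Ioi_subset_Ici_self).aestronglyMeasurable measurableSet_Ioi
  have hexpmeas : AEStronglyMeasurable (fun t : ℝ => Real.exp (-t * α))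
      (volume.restrict (Set.Ioi (0:ℝ))) :=
    (Real.continuous_exp.comp (by continuity)).aestronglyMeasurable
  -- integrability of e^{-tα} N t x
  have hint_eN : ∀ x, IntegrableOn (fun t => Real.exp (-t * α) * N t x) (Set.Ioi 0) := by
    intro x
    refine Integrable.mono' (hexp_int.const_mul C) (hexpmeas.mul (hNmeas x)) ?_
    filter_upwards [ae_restrict_mem measurableSet_Ioi] with t ht
    rw [Real.norm_eq_abs, abs_mul, Real.abs_exp]
    calc Real.exp (-t * α) * |N t x| ≤ Real.exp (-t * α) * C := by
          gcongr; exact hC t ht.le x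
      _ = C * Real.exp (-t * α) := mul_comm _ _
  -- bound on v
  have hvb : ∀ x, |v x| ≤ C * K := by
    intro x
    rw [hv x]
    have habs : |∫ t in Set.Ioi (0:ℝ), Real.exp (-t * α) * N t x|
        ≤ ∫ t in Set.Ioi (0:ℝ), |Real.exp (-t * α) * N t x| := by
      simp only [← Real.norm_eq_abs]
      exact norm_integral_le_integral_norm _
    calc |∫ t in Set.Ioi (0:ℝ), Real.exp (-t * α) * N t x|
        ≤ ∫ t in Set.Ioi (0:ℝ), |Real.exp (-t * α) * N t x| := habs
      _ ≤ ∫ t in Set.Ioi (0:ℝ), C * Real.exp (-t * α) := by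
          refine integral_mono_of_nonneg ?_ (hexp_int.const_mul C) ?_
          · filter_upwards with t; positivity
          · filter_upwards [ae_restrict_mem measurableSet_Ioi] with t ht
            rw [abs_mul, Real.abs_exp, mul_comm]
            gcongr
            exact hC t ht.le x
      _ = C * K := by rw [integral_const_mul]
  -- Part 1
  have hsum_v : ∀ x, Summable fun y => b x y * |v y| := by
    intro x
    refine Summable.of_nonneg_of_le
      (fun y => mul_nonneg (hb_nonneg x y) (abs_nonneg _))
      (fun y => mul_le_mul_of_nonneg_left (hvb y) (hb_nonneg x y))
      ((hb_sum x).mul_right (C * K))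
  refine ⟨hsum_v, fun x => ?_⟩
  -- abbreviation for the spatial sum
  set S : ℝ → ℝ := fun t => ∑' y, b x y * (N t x - N t y) with hSdef
  have hformal : ∀ u : V → ℝ, formalL b c m u x
      = (1 / m x) * (∑' y, b x y * (u x - u y)) + (c x / m x) * u x := fun u => rfl
  -- summability of the spatial sums, for t ≥ 0
  have habsS : ∀ t, 0 ≤ t → Summable fun y => |b x y * (N t x - N t y)| := by
    intro t ht
    refine Summable.of_nonneg_of_le (fun y => abs_nonneg _) (fun y => ?_)
      (((hb_sum x).mul_right C).add (hdom t ht x))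
    rw [abs_mul, abs_of_nonneg (hb_nonneg x y)]
    calc b x y * |N t x - N t y| ≤ b x y * (|N t x| + |N t y|) := by
          exact mul_le_mul_of_nonneg_left (abs_sub _ _) (hb_nonneg x y)
      _ ≤ b x y * (C + |N t y|) := by
          exact mul_le_mul_of_nonneg_left (by gcongr; exact hC t ht x) (hb_nonneg x y)
      _ = b x y * C + b x y * |N t y| := by ring
  have hSsum : ∀ t, 0 ≤ t → Summable fun y => b x y * (N t x - N t y) := fun t ht =>
    (habsS t ht).of_abs
  -- bound on S
  have hSb : ∀ t, 0 ≤ t → |S t| ≤ (∑' y, b x y) * (2 * C) := by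
    intro t ht
    have habs : |S t| ≤ ∑' y, |b x y * (N t x - N t y)| := by
      simp only [hSdef, ← Real.norm_eq_abs]
      exact norm_tsum_le_tsum_norm (by simp only [Real.norm_eq_abs]; exact habsS t ht)
    calc |S t| ≤ ∑' y, |b x y * (N t x - N t y)| := habs
      _ ≤ ∑' y, b x y * (2 * C) := by
          refine Summable.tsum_le_tsum (fun y => ?_) (habsS t ht) ((hb_sum x).mul_right _)
          rw [abs_mul, abs_of_nonneg (hb_nonneg x y)]
          calc b x y * |N t x - N t y| ≤ b x y * (|N t x| + |N t y|) := by
                exact mul_le_mul_of_nonneg_left (abs_sub _ _) (hb_nonneg x y)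
            _ ≤ b x y * (2 * C) := by
                have h1 := hC t ht x; have h2 := hC t ht y
                have h3 : |N t x| + |N t y| ≤ 2 * C := by linarith
                exact mul_le_mul_of_nonneg_left h3 (hb_nonneg x y)
      _ = (∑' y, b x y) * (2 * C) := tsum_mul_right
  -- bound on the formal Laplacian of N t at x
  set D : ℝ := (1 / m x) * ((∑' y, b x y) * (2 * C)) + (c x / m x) * C with hDdef
  have hLb : ∀ t, 0 ≤ t → |formalL b c m (N t) x| ≤ D := by
    intro t ht
    rw [hformal]
    have hmx := (hm x).le
    have h1 : |(1 / m x) * S t| ≤ (1 / m x) * ((∑' y, b x y) * (2 * C)) := by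
      rw [abs_mul, abs_of_nonneg (by positivity : (0:ℝ) ≤ 1 / m x)]
      exact mul_le_mul_of_nonneg_left (hSb t ht) (by positivity)
    have h2 : |(c x / m x) * N t x| ≤ (c x / m x) * C := by
      rw [abs_mul, abs_of_nonneg (div_nonneg (hc x) hmx)]
      exact mul_le_mul_of_nonneg_left (hC t ht x) (div_nonneg (hc x) hmx)
    calc |(1 / m x) * S t + (c x / m x) * N t x|
        ≤ |(1 / m x) * S t| + |(c x / m x) * N t x| := abs_add_le _ _
      _ ≤ D := by rw [hDdef]; linarith
  -- measurability of t ↦ formalL (N t) x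
  have hLmeas : AEStronglyMeasurable (fun t => formalL b c m (N t) x)
      (volume.restrict (Set.Ioi (0:ℝ))) := by
    refine AEStronglyMeasurable.congr
      ((measurable_deriv (fun s => N s x)).neg.aestronglyMeasurable.restrict) ?_
    filter_upwards [ae_restrict_mem measurableSet_Ioi] with t ht
    rw [Pi.neg_apply, (hheat x t ht.le).deriv]; ring
  -- integrability of e^{-tα} * formalL (N t) x
  have hL_int : IntegrableOn (fun t => Real.exp (-t * α) * formalL b c m (N t) x)
      (Set.Ioi 0) := by
    refine Integrable.mono' (hexp_int.const_mul D) (hexpmeas.mul hLmeas) ?_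
    filter_upwards [ae_restrict_mem measurableSet_Ioi] with t ht
    rw [Real.norm_eq_abs, abs_mul, Real.abs_exp]
    calc Real.exp (-t * α) * |formalL b c m (N t) x|
        ≤ Real.exp (-t * α) * D := by gcongr; exact hLb t ht.le
      _ = D * Real.exp (-t * α) := mul_comm _ _
  -- derivative of the exponential weight
  have hde : ∀ t : ℝ, HasDerivAt (fun s : ℝ => Real.exp (-s * α))
      (-α * Real.exp (-t * α)) t := by
    intro t
    have h1 : HasDerivAt (fun s : ℝ => -s * α) (-α) t := by
      simpa using ((hasDerivAt_id t).neg.mul_const α)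
    simpa [mul_comm] using h1.exp
  -- integration by parts on (0,∞)
  have hf'int : IntegrableOn (fun t =>
      -α * Real.exp (-t * α) * N t x
        + Real.exp (-t * α) * -(formalL b c m (N t) x)) (Set.Ioi 0) := by
    have h1 : IntegrableOn (fun t => -α * Real.exp (-t * α) * N t x) (Set.Ioi 0) := by
      have := (hint_eN x).const_mul (-α)
      simpa [mul_assoc, IntegrableOn] using this
    have h2 : IntegrableOn (fun t => Real.exp (-t * α) * -(formalL b c m (N t) x))
        (Set.Ioi 0) := by simpa [mul_neg, IntegrableOn] using hL_int.neg'
    exact h1.add h2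
  have htend : Filter.Tendsto (fun t => Real.exp (-t * α) * N t x)
      Filter.atTop (nhds 0) := by
    have hmul : Filter.Tendsto (fun t : ℝ => t * α) Filter.atTop Filter.atTop :=
      Filter.Tendsto.atTop_mul_const hα Filter.tendsto_id
    have hexp0 : Filter.Tendsto (fun t : ℝ => Real.exp (-t * α))
        Filter.atTop (nhds 0) := by
      have h := Real.tendsto_exp_atBot.comp (Filter.tendsto_neg_atTop_atBot.comp hmul)
      have heq : (fun t : ℝ => Real.exp (-t * α))
          = Real.exp ∘ Neg.neg ∘ fun t : ℝ => t * α := by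
        funext t; simp [Function.comp, neg_mul]
      rw [heq]; exact h
    have hg0 : Filter.Tendsto (fun t : ℝ => C * Real.exp (-t * α))
        Filter.atTop (nhds 0) := by
      have h := hexp0.const_mul C
      rwa [mul_zero] at h
    refine squeeze_zero_norm' ?_ hg0
    filter_upwards [Filter.eventually_ge_atTop (0:ℝ)] with t ht
    rw [Real.norm_eq_abs, abs_mul, Real.abs_exp]
    calc Real.exp (-t * α) * |N t x| ≤ Real.exp (-t * α) * C := by
          gcongr; exact hC t ht x
      _ = C * Real.exp (-t * α) := mul_comm _ _
  have hIBP : (∫ t in Set.Ioi (0:ℝ),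
      (-α * Real.exp (-t * α) * N t x
        + Real.exp (-t * α) * -(formalL b c m (N t) x))) = 0 := by
    have := integral_Ioi_of_hasDerivAt_of_tendsto' (a := (0:ℝ))
      (f := fun t => Real.exp (-t * α) * N t x)
      (f' := fun t => -α * Real.exp (-t * α) * N t x
        + Real.exp (-t * α) * -(formalL b c m (N t) x))
      (fun t ht => (hde t).mul (hheat x t ht)) hf'int htend
    rw [this]; simp [hN0 x]
  -- key identity: ∫ e^{-tα} L̃N_t x = -(α v x)
  have hkey : (∫ t in Set.Ioi (0:ℝ), Real.exp (-t * α) * formalL b c m (N t) x)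
      = -(α * v x) := by
    have h1 : IntegrableOn (fun t => -α * Real.exp (-t * α) * N t x) (Set.Ioi 0) := by
      have := (hint_eN x).const_mul (-α)
      simpa [mul_assoc, IntegrableOn] using this
    have h2int : IntegrableOn (fun t => Real.exp (-t * α) * -(formalL b c m (N t) x))
        (Set.Ioi 0) := by simpa [mul_neg, IntegrableOn] using hL_int.neg'
    have hadd := integral_add (μ := volume.restrict (Set.Ioi (0:ℝ))) h1 h2int
    beta_reduce at hadd
    rw [hIBP] at hadd
    have h2 : (∫ t in Set.Ioi (0:ℝ), -α * Real.exp (-t * α) * N t x)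
        = -α * v x := by
      have : (fun t => -α * Real.exp (-t * α) * N t x)
          = fun t => -α * (Real.exp (-t * α) * N t x) := by funext t; ring
      rw [this, integral_const_mul, hv x]
    have h3 : (∫ t in Set.Ioi (0:ℝ), Real.exp (-t * α) * -(formalL b c m (N t) x))
        = -(∫ t in Set.Ioi (0:ℝ), Real.exp (-t * α) * formalL b c m (N t) x) := by
      rw [← integral_neg]
      congr 1; funext t; ring
    rw [h2, h3] at hadd
    linarith
  -- exchange sum and integral for the spatial sum
  set g : V → ℝ → ℝ := fun y t => Real.exp (-t * α) * (b x y * (N t x - N t y))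
    with hgdef
  have hgint : ∀ y, Integrable (g y) (volume.restrict (Set.Ioi (0:ℝ))) := by
    intro y
    refine Integrable.mono' (hexp_int.const_mul (b x y * (2 * C)))
      (hexpmeas.mul (((hNmeas x).sub (hNmeas y)).const_mul _)) ?_
    filter_upwards [ae_restrict_mem measurableSet_Ioi] with t ht
    rw [Real.norm_eq_abs, hgdef]
    simp only
    rw [abs_mul, Real.abs_exp, abs_mul, abs_of_nonneg (hb_nonneg x y)]
    have hb2 : b x y * |N t x - N t y| ≤ b x y * (2 * C) := by
      calc b x y * |N t x - N t y| ≤ b x y * (|N t x| + |N t y|) := by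
            exact mul_le_mul_of_nonneg_left (abs_sub _ _) (hb_nonneg x y)
        _ ≤ b x y * (2 * C) := by
            have h1 := hC t ht.le x; have h2 := hC t ht.le y
            have h3 : |N t x| + |N t y| ≤ 2 * C := by linarith
            exact mul_le_mul_of_nonneg_left h3 (hb_nonneg x y)
    calc Real.exp (-t * α) * (b x y * |N t x - N t y|)
        ≤ Real.exp (-t * α) * (b x y * (2 * C)) := by gcongr
      _ = b x y * (2 * C) * Real.exp (-t * α) := by ring
  have hgnorm : ∀ y, (∫ t in Set.Ioi (0:ℝ), ‖g y t‖) ≤ b x y * (2 * C * K) := by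
    intro y
    calc (∫ t in Set.Ioi (0:ℝ), ‖g y t‖)
        ≤ ∫ t in Set.Ioi (0:ℝ), b x y * (2 * C) * Real.exp (-t * α) := by
          refine integral_mono_of_nonneg ?_ (hexp_int.const_mul _) ?_
          · filter_upwards with t; exact norm_nonneg _
          · filter_upwards [ae_restrict_mem measurableSet_Ioi] with t ht
            rw [Real.norm_eq_abs, hgdef]
            simp only
            rw [abs_mul, Real.abs_exp, abs_mul, abs_of_nonneg (hb_nonneg x y)]
            have hb2 : b x y * |N t x - N t y| ≤ b x y * (2 * C) := by
              calc b x y * |N t x - N t y| ≤ b x y * (|N t x| + |N t y|) := by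
                    exact mul_le_mul_of_nonneg_left (abs_sub _ _) (hb_nonneg x y)
                _ ≤ b x y * (2 * C) := by
                    have h1 := hC t ht.le x; have h2 := hC t ht.le y
                    have h3 : |N t x| + |N t y| ≤ 2 * C := by linarith
                    exact mul_le_mul_of_nonneg_left h3 (hb_nonneg x y)
            calc Real.exp (-t * α) * (b x y * |N t x - N t y|)
                ≤ Real.exp (-t * α) * (b x y * (2 * C)) := by gcongr
              _ = b x y * (2 * C) * Real.exp (-t * α) := by ring
      _ = b x y * (2 * C * K) := by rw [integral_const_mul]; ring
  have hgsum : Summable fun y => ∫ t in Set.Ioi (0:ℝ), ‖g y t‖ := by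
    refine Summable.of_nonneg_of_le
      (fun y => integral_nonneg fun t => norm_nonneg _) hgnorm
      ((hb_sum x).mul_right _)
  have hswap : (∑' y, ∫ t in Set.Ioi (0:ℝ), g y t)
      = ∫ t in Set.Ioi (0:ℝ), ∑' y, g y t :=
    integral_tsum_of_summable_integral_norm hgint hgsum
  have hgval : ∀ y, (∫ t in Set.Ioi (0:ℝ), g y t) = b x y * (v x - v y) := by
    intro y
    have h1 : (fun t => g y t)
        = fun t => b x y * (Real.exp (-t * α) * N t x)
            - b x y * (Real.exp (-t * α) * N t y) := by
      funext t; rw [hgdef]; ring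
    rw [h1, integral_sub ((hint_eN x).const_mul _) ((hint_eN y).const_mul _),
      integral_const_mul, integral_const_mul, ← hv x, ← hv y]
    ring
  have hgpt : ∀ t, (∑' y, g y t) = Real.exp (-t * α) * S t := by
    intro t
    simp only [hgdef, hSdef]
    exact tsum_mul_left
  have htsum_eq : (∑' y, b x y * (v x - v y))
      = ∫ t in Set.Ioi (0:ℝ), Real.exp (-t * α) * S t := by
    rw [← funext hgval, hswap]
    congr 1; funext t; exact hgpt t
  -- integrability of e^{-tα} * S t  (via formalL)
  have hS_int : IntegrableOn (fun t => (1 / m x) * (Real.exp (-t * α) * S t))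
      (Set.Ioi 0) := by
    have heq : (fun t => (1 / m x) * (Real.exp (-t * α) * S t))
        = fun t => Real.exp (-t * α) * formalL b c m (N t) x
            - (c x / m x) * (Real.exp (-t * α) * N t x) := by
      funext t
      have hS_apply : S t = ∑' y, b x y * (N t x - N t y) := rfl
      rw [hformal (N t), ← hS_apply]; ring
    rw [heq]
    exact hL_int.sub ((hint_eN x).const_mul _)
  -- conclude
  have hmain : formalL b c m v x = -(α * v x) := by
    calc formalL b c m v x
        = (1 / m x) * (∑' y, b x y * (v x - v y)) + (c x / m x) * v x := hformal v
      _ = (1 / m x) * (∫ t in Set.Ioi (0:ℝ), Real.exp (-t * α) * S t)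
            + (c x / m x) * (∫ t in Set.Ioi (0:ℝ), Real.exp (-t * α) * N t x) := by
          rw [htsum_eq, hv x]
      _ = (∫ t in Set.Ioi (0:ℝ), (1 / m x) * (Real.exp (-t * α) * S t))
            + ∫ t in Set.Ioi (0:ℝ), (c x / m x) * (Real.exp (-t * α) * N t x) := by
          rw [integral_const_mul, integral_const_mul]
      _ = ∫ t in Set.Ioi (0:ℝ), ((1 / m x) * (Real.exp (-t * α) * S t)
            + (c x / m x) * (Real.exp (-t * α) * N t x)) := by
          rw [← integral_add hS_int ((hint_eN x).const_mul _)]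
      _ = ∫ t in Set.Ioi (0:ℝ), Real.exp (-t * α) * formalL b c m (N t) x := by
          congr 1; funext t
          have hS_apply : S t = ∑' y, b x y * (N t x - N t y) := rfl
          rw [hformal (N t), ← hS_apply]; ring
      _ = -(α * v x) := hkey
  linarith
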